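/- Let a ≤ b be integers. There exists an integer l ≥ 0 depending only on b−a such that: for every commutative ring R, every π ∈ R, and every short exact sequence of cochain complexes of R-modules 0 → M_1^• → M_2^• → M_3^• → 0 (exact in each degree), if M_2^• is π-[a−1,b−1]-pseudo-coherent and M_3^• is π-[a−2,b−1]-pseudo-coherent, then M_1^• is π^l-[a−1,b]-pseudo-coherent. -/

import Mathlib

open CategoryTheory

section PseudoCoherence

variable {R : Type*} [CommRing R]

/-- A linear map (in `ModuleCat R`) is a `π`-isomorphism if its kernel and cokernel are
annihilated by `π`. -/
def IsPiIsomorphism (π : R) {M N : ModuleCat R} (f : M ⟶ N) : Prop :=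
  (∀ x : M, f x = 0 → π • x = 0) ∧ (∀ y : N, ∃ x : M, π • y = f x)

/-- A linear map (in `ModuleCat R`) is `π`-surjective if its cokernel is annihilated by `π`. -/
def IsPiSurjective (π : R) {M N : ModuleCat R} (f : M ⟶ N) : Prop :=
  ∀ y : N, ∃ x : M, π • y = f x

/-- A morphism of cochain complexes of `R`-modules `f : P^• ⟶ M^•` is a `π`-`[a,b]`-pseudo
resolution if `P^•` is a complex of finite free `R`-modules vanishing outside `[a,b]`, and
`H^i(f)` is a `π`-isomorphism for `i > a` and `π`-surjective for `i = a`. -/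
def IsPiPseudoResolution (π : R) (a b : ℤ) {P M : CochainComplex (ModuleCat R) ℤ}
    (f : P ⟶ M) : Prop :=
  (∀ i : ℤ, Module.Free R (P.X i)) ∧ (∀ i : ℤ, Module.Finite R (P.X i)) ∧
  (∀ i : ℤ, i < a ∨ b < i → ∀ x : P.X i, x = 0) ∧
  (∀ i : ℤ, a < i → IsPiIsomorphism π (HomologicalComplex.homologyMap f i)) ∧
  IsPiSurjective π (HomologicalComplex.homologyMap f a)

/-- A cochain complex of `R`-modules is `π`-`[a,b]`-pseudo-coherent if it vanishes in degrees
`> b` and admits a `π`-`[a,b]`-pseudo resolution. -/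
def IsPiPseudoCoherent (π : R) (a b : ℤ) (M : CochainComplex (ModuleCat R) ℤ) : Prop :=
  (∀ i : ℤ, b < i → ∀ x : M.X i, x = 0) ∧
  ∃ (P : CochainComplex (ModuleCat R) ℤ) (f : P ⟶ M), IsPiPseudoResolution π a b f

end PseudoCoherence

universe u

section Proof

namespace PCProof

variable {R : Type*} [CommRing R]


variable {R : Type*} [CommRing R]

lemma isPiSurjective_of_comm (π : R) {A B A' B' : ModuleCat R} (g : A ⟶ B) (g' : A' ⟶ B')
    (eA : A ≅ A') (eB : B ≅ B') (h : g ≫ eB.hom = eA.hom ≫ g') :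
    IsPiSurjective π g ↔ IsPiSurjective π g' := by
  let ea := eA.toLinearEquiv
  let eb := eB.toLinearEquiv
  have h1 : ∀ x : A, eb (g x) = g' (ea x) := fun x => congrArg (fun m => m x) h
  constructor
  · intro hs y'
    obtain ⟨x, hx⟩ := hs (eb.symm y')
    refine ⟨ea x, ?_⟩
    have := congrArg eb hx
    rw [map_smul, eb.apply_symm_apply, h1] at this
    exact this
  · intro hs y
    obtain ⟨x', hx⟩ := hs (eb y)
    refine ⟨ea.symm x', ?_⟩
    apply eb.injective
    rw [map_smul, hx, h1, ea.apply_symm_apply]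

lemma isPiKer_of_comm (π : R) {A B A' B' : ModuleCat R} (g : A ⟶ B) (g' : A' ⟶ B')
    (eA : A ≅ A') (eB : B ≅ B') (h : g ≫ eB.hom = eA.hom ≫ g') :
    (∀ x : A, g x = 0 → π • x = 0) ↔ (∀ x : A', g' x = 0 → π • x = 0) := by
  let ea := eA.toLinearEquiv
  let eb := eB.toLinearEquiv
  have h1 : ∀ x : A, eb (g x) = g' (ea x) := fun x => congrArg (fun m => m x) h
  constructor
  · intro hk x' hx'
    have hg : g (ea.symm x') = 0 := by
      apply eb.injective
      rw [h1, ea.apply_symm_apply, hx']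
      simp
    have := congrArg ea (hk _ hg)
    rw [map_smul, map_zero, ea.apply_symm_apply] at this
    exact this
  · intro hk x hx
    have : g' (ea x) = 0 := by rw [← h1, hx, map_zero]
    have := hk _ this
    rw [← map_smul] at this
    exact ea.injective (by rw [this, map_zero])



abbrev _root_.CategoryTheory.ShortComplex.moduleCatHomology (S : ShortComplex (ModuleCat R)) :
    ModuleCat R :=
  ModuleCat.of R (LinearMap.ker S.g.hom ⧸ LinearMap.range S.moduleCatToCycles)

variable {S T : ShortComplex (ModuleCat R)} (ψ : S ⟶ T)

lemma tau2_ker (x : S.X₂) (hx : S.g x = 0) : T.g (ψ.τ₂ x) = 0 := by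
  have := congrArg (fun m => m x) ψ.comm₂₃
  dsimp at this
  rw [this, hx, map_zero]

def kerMap : LinearMap.ker S.g.hom →ₗ[R] LinearMap.ker T.g.hom :=
  LinearMap.restrict ((ψ.τ₂).hom : S.X₂ →ₗ[R] T.X₂) (fun x hx => tau2_ker ψ x hx)

@[simp] lemma kerMap_apply (x : LinearMap.ker S.g.hom) :
    (kerMap ψ x : T.X₂) = ψ.τ₂ (x : S.X₂) := rfl

lemma kerMap_range_le :
    LinearMap.range S.moduleCatToCycles ≤
      Submodule.comap (kerMap ψ) (LinearMap.range T.moduleCatToCycles) := by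
  rintro z ⟨w, rfl⟩
  refine ⟨ψ.τ₁ w, ?_⟩
  apply Subtype.ext
  show T.f (ψ.τ₁ w) = ψ.τ₂ (S.f w)
  exact congrArg (fun m => m w) ψ.comm₁₂

noncomputable def hMap : S.moduleCatHomology ⟶ T.moduleCatHomology :=
  ModuleCat.ofHom (Submodule.mapQ _ _ (kerMap ψ) (kerMap_range_le ψ))

lemma hMap_mk (z : LinearMap.ker S.g.hom) :
    hMap ψ (Submodule.Quotient.mk z) = Submodule.Quotient.mk (kerMap ψ z) := rfl


noncomputable def lhmd : ShortComplex.LeftHomologyMapData ψ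
    S.moduleCatLeftHomologyData T.moduleCatLeftHomologyData where
  φK := ModuleCat.ofHom (kerMap ψ)
  φH := hMap ψ
  commi := rfl
  commf' := by
    ext w
    apply Subtype.ext
    show ψ.τ₂ (S.f w) = T.f (ψ.τ₁ w)
    exact (congrArg (fun m => m w) ψ.comm₁₂).symm
  commπ := rfl

lemma homologyMap_eq_hMap :
    ShortComplex.homologyMap ψ ≫ T.moduleCatLeftHomologyData.homologyIso.hom =
      S.moduleCatLeftHomologyData.homologyIso.hom ≫ hMap ψ :=
  (lhmd ψ).homologyMap_comm

lemma mk_eq_zero_iff (z : LinearMap.ker T.g.hom) :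
    (Submodule.Quotient.mk z : T.moduleCatHomology) = 0 ↔ ∃ w : T.X₁, T.f w = (z : T.X₂) := by
  rw [Submodule.Quotient.mk_eq_zero]
  constructor
  · rintro ⟨w, hw⟩
    exact ⟨w, congrArg Subtype.val hw⟩
  · rintro ⟨w, hw⟩
    exact ⟨w, Subtype.ext hw⟩

lemma isPiSurjective_hMap_iff (π : R) :
    IsPiSurjective π (hMap ψ) ↔
      ∀ y : T.X₂, T.g y = 0 → ∃ x : S.X₂, S.g x = 0 ∧
        ∃ w : T.X₁, π • y = ψ.τ₂ x + T.f w := by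
  constructor
  · intro hs y hy
    obtain ⟨hcl, hcl_eq⟩ := hs (Submodule.Quotient.mk ⟨y, hy⟩)
    obtain ⟨z, rfl⟩ := Submodule.Quotient.mk_surjective _ hcl
    rw [hMap_mk] at hcl_eq
    rw [← Submodule.Quotient.mk_smul, ← sub_eq_zero, ← Submodule.Quotient.mk_sub] at hcl_eq
    rw [mk_eq_zero_iff] at hcl_eq
    obtain ⟨w, hw⟩ := hcl_eq
    refine ⟨(z : S.X₂), z.2, w, ?_⟩
    have : T.f w = π • y - ψ.τ₂ (z : S.X₂) := hw
    rw [this]; abel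
  · intro hs cl
    obtain ⟨z, rfl⟩ := Submodule.Quotient.mk_surjective _ cl
    obtain ⟨x, hx, w, hw⟩ := hs (z : T.X₂) z.2
    refine ⟨Submodule.Quotient.mk ⟨x, hx⟩, ?_⟩
    rw [hMap_mk, ← Submodule.Quotient.mk_smul, ← sub_eq_zero, ← Submodule.Quotient.mk_sub,
      mk_eq_zero_iff]
    refine ⟨w, ?_⟩
    show T.f w = ↑(π • z - kerMap ψ ⟨x, hx⟩)
    have : ((π • z - kerMap ψ ⟨x, hx⟩ : LinearMap.ker T.g.hom) : T.X₂) = π • (z : T.X₂) - ψ.τ₂ x := rfl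
    rw [this, hw]
    abel

lemma isPiKer_hMap_iff (π : R) :
    (∀ h : S.moduleCatHomology, hMap ψ h = 0 → π • h = 0) ↔
      ∀ x : S.X₂, S.g x = 0 → (∃ w : T.X₁, ψ.τ₂ x = T.f w) →
        ∃ v : S.X₁, π • x = S.f v := by
  constructor
  · intro hk x hx hw
    have h0 : hMap ψ (Submodule.Quotient.mk ⟨x, hx⟩) = 0 := by
      rw [hMap_mk, mk_eq_zero_iff]
      obtain ⟨w, hw⟩ := hw
      exact ⟨w, hw.symm⟩
    have := hk _ h0
    rw [← Submodule.Quotient.mk_smul, mk_eq_zero_iff] at this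
    obtain ⟨v, hv⟩ := this
    exact ⟨v, hv.symm⟩
  · intro hk cl hcl
    obtain ⟨z, rfl⟩ := Submodule.Quotient.mk_surjective _ cl
    rw [hMap_mk, mk_eq_zero_iff] at hcl
    obtain ⟨w, hw⟩ := hcl
    obtain ⟨v, hv⟩ := hk (z : S.X₂) z.2 ⟨w, hw.symm⟩
    rw [← Submodule.Quotient.mk_smul, mk_eq_zero_iff]
    exact ⟨v, hv.symm⟩



variable {R : Type*} [CommRing R]

lemma exists_comp_eq {P M N : Type*} [AddCommGroup P] [Module R P] [Module.Free R P]
    [AddCommGroup M] [Module R M] [AddCommGroup N] [Module R N]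
    (g : M →ₗ[R] N) (u : P →ₗ[R] N) (h : ∀ x : P, ∃ m : M, g m = u x) :
    ∃ v : P →ₗ[R] M, ∀ x, g (v x) = u x := by
  let B := Module.Free.chooseBasis R P
  choose m hm using h
  refine ⟨B.constr R (fun i => m (B i)), ?_⟩
  have : g ∘ₗ (B.constr R (fun i => m (B i))) = u := by
    apply B.ext
    intro i
    simp [hm]
  intro x
  exact LinearMap.congr_fun this x

lemma d_d (X : CochainComplex (ModuleCat R) ℤ) (i j k : ℤ) (x : X.X i) :
    X.d j k (X.d i j x) = 0 := congrArg (fun m => m x) (X.d_comp_d i j k)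

lemma hom_comm {X Y : CochainComplex (ModuleCat R) ℤ} (f : X ⟶ Y) (i j : ℤ) (x : X.X i) :
    Y.d i j (f.f i x) = f.f j (X.d i j x) := congrArg (fun m => m x) (f.comm i j)

def EKer (π : R) {X Y : CochainComplex (ModuleCat R) ℤ} (f : X ⟶ Y) (j : ℤ) : Prop :=
  ∀ i k : ℤ, i + 1 = j → j + 1 = k → ∀ x : X.X j, X.d j k x = 0 →
    (∃ w : Y.X i, f.f j x = Y.d i j w) → ∃ v : X.X i, π • x = X.d i j v

def ESurj (π : R) {X Y : CochainComplex (ModuleCat R) ℤ} (f : X ⟶ Y) (j : ℤ) : Prop :=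
  ∀ i k : ℤ, i + 1 = j → j + 1 = k → ∀ y : Y.X j, Y.d j k y = 0 →
    ∃ x : X.X j, X.d j k x = 0 ∧ ∃ w : Y.X i, π • y = f.f j x + Y.d i j w

section Lift

variable (π : R) {P₂ P₃ M₃ : CochainComplex (ModuleCat R) ℤ}
  (u : P₂ ⟶ M₃) (f₃ : P₃ ⟶ M₃)

lemma pi_lift (a b : ℤ)
    (hfree : ∀ i : ℤ, Module.Free R (P₂.X i))
    (hsupp : ∀ i : ℤ, i < a - 1 ∨ b - 1 < i → ∀ x : P₂.X i, x = 0)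
    (hker : ∀ j : ℤ, a - 1 ≤ j → EKer π f₃ j)
    (hsurj : ∀ j : ℤ, a - 2 ≤ j → ESurj π f₃ j) :
    ∃ (c : ∀ j : ℤ, P₂.X j →ₗ[R] P₃.X j) (s : ∀ i j : ℤ, P₂.X j →ₗ[R] M₃.X i),
      (∀ j k : ℤ, j + 1 = k → ∀ x : P₂.X j, P₃.d j k (c j x) = c k (P₂.d j k x)) ∧
      (∀ i j k : ℤ, i + 1 = j → j + 1 = k → ∀ x : P₂.X j,
        f₃.f j (c j x) = (π ^ (2 * ((b - a).toNat + 1))) • u.f j x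
          + M₃.d i j (s i j x) + s j k (P₂.d j k x)) := by
  suffices H : ∀ n : ℕ, ∃ (c : ∀ j : ℤ, P₂.X j →ₗ[R] P₃.X j)
      (s : ∀ i j : ℤ, P₂.X j →ₗ[R] M₃.X i),
      (∀ j k : ℤ, j + 1 = k → b - n ≤ j → ∀ x : P₂.X j,
        P₃.d j k (c j x) = c k (P₂.d j k x)) ∧
      (∀ i j k : ℤ, i + 1 = j → j + 1 = k → b - n ≤ j → ∀ x : P₂.X j,
        f₃.f j (c j x) = (π ^ (2 * n)) • u.f j x
          + M₃.d i j (s i j x) + s j k (P₂.d j k x)) by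
    obtain ⟨c, s, hc, hE⟩ := H ((b - a).toNat + 1)
    have hlow : ∀ j : ℤ, j < a - 1 → ∀ x : P₂.X j, x = 0 := fun j hj x =>
      hsupp j (Or.inl hj) x
    refine ⟨c, s, ?_, ?_⟩
    · intro j k hk x
      by_cases hj : b - (((b - a).toNat + 1 : ℕ) : ℤ) ≤ j
      · exact hc j k hk hj x
      · rw [hlow j (by omega) x]; simp
    · intro i j k hi hk x
      by_cases hj : b - (((b - a).toNat + 1 : ℕ) : ℤ) ≤ j
      · exact hE i j k hi hk hj x
      · rw [hlow j (by omega) x]; simp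
  intro n
  induction n with
  | zero =>
    refine ⟨fun _ => 0, fun _ _ => 0, ?_, ?_⟩
    · intro j k hk hj x
      rw [hsupp j (Or.inr (by omega)) x]; simp
    · intro i j k hi hk hj x
      rw [hsupp j (Or.inr (by omega)) x]; simp
  | succ n ih =>
    obtain ⟨c, s, hc, hE⟩ := ih
    set i₀ : ℤ := b - ((n : ℤ) + 1) with hi₀
    have key : ∃ (cN : P₂.X i₀ →ₗ[R] P₃.X i₀) (sN : P₂.X i₀ →ₗ[R] M₃.X (i₀ - 1)),
        (∀ x : P₂.X i₀, P₃.d i₀ (i₀+1) (cN x) = (π^2) • c (i₀+1) (P₂.d i₀ (i₀+1) x)) ∧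
        (∀ x : P₂.X i₀, f₃.f i₀ (cN x) = (π ^ (2 * (n+1))) • u.f i₀ x
          + M₃.d (i₀-1) i₀ (sN x) + (π^2) • s i₀ (i₀+1) (P₂.d i₀ (i₀+1) x)) := by
      by_cases ha : a - 1 ≤ i₀
      · have hfree' := hfree i₀
        -- cycle condition for w x := c (i₀+1) (d x)
        have hwd : ∀ x : P₂.X i₀, P₃.d (i₀+1) (i₀+2) (c (i₀+1) (P₂.d i₀ (i₀+1) x)) = 0 := by
          intro x
          rw [hc (i₀+1) (i₀+2) (by omega) (by omega), d_d]
          simp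
        have hwz : ∀ x : P₂.X i₀, f₃.f (i₀+1) (c (i₀+1) (P₂.d i₀ (i₀+1) x)) =
            M₃.d i₀ (i₀+1) ((π ^ (2*n)) • u.f i₀ x + s i₀ (i₀+1) (P₂.d i₀ (i₀+1) x)) := by
          intro x
          have h1 := hE i₀ (i₀+1) (i₀+2) rfl (by omega) (by omega) (P₂.d i₀ (i₀+1) x)
          rw [d_d] at h1
          simp only [map_zero, add_zero] at h1
          rw [h1, map_add, map_smul, hom_comm u]
        -- step 1 : q with d q = π • c (d x)
        obtain ⟨q, hq⟩ := exists_comp_eq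
          ((P₃.d i₀ (i₀+1)).hom : P₃.X i₀ →ₗ[R] P₃.X (i₀+1))
          (π • ((c (i₀+1) : P₂.X (i₀+1) →ₗ[R] P₃.X (i₀+1)) ∘ₗ
             ((P₂.d i₀ (i₀+1)).hom : P₂.X i₀ →ₗ[R] P₂.X (i₀+1))))
          (by
            intro x
            obtain ⟨v, hv⟩ := hker (i₀+1) (by omega) i₀ (i₀+2) rfl (by omega)
              (c (i₀+1) (P₂.d i₀ (i₀+1) x)) (hwd x)
              ⟨_, hwz x⟩
            exact ⟨v, by simpa using hv.symm⟩)
        have hq' : ∀ x : P₂.X i₀, P₃.d i₀ (i₀+1) (q x) = π • c (i₀+1) (P₂.d i₀ (i₀+1) x) :=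
          fun x => by simpa using hq x
        -- step 2 : Y
        set Z : P₂.X i₀ →ₗ[R] M₃.X i₀ :=
          (π ^ (2*n)) • ((u.f i₀).hom : P₂.X i₀ →ₗ[R] M₃.X i₀)
            + (s i₀ (i₀+1) : P₂.X (i₀+1) →ₗ[R] M₃.X i₀) ∘ₗ
              ((P₂.d i₀ (i₀+1)).hom : P₂.X i₀ →ₗ[R] P₂.X (i₀+1)) with hZ
        have hZapp : ∀ x, Z x = (π ^ (2*n)) • u.f i₀ x + s i₀ (i₀+1) (P₂.d i₀ (i₀+1) x) :=
          fun x => rfl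
        set Y : P₂.X i₀ →ₗ[R] M₃.X i₀ :=
          π • Z - ((f₃.f i₀).hom : P₃.X i₀ →ₗ[R] M₃.X i₀) ∘ₗ q with hY
        have hYapp : ∀ x, Y x = π • Z x - f₃.f i₀ (q x) := fun x => rfl
        have hYcyc : ∀ x, M₃.d i₀ (i₀+1) (Y x) = 0 := by
          intro x
          rw [hYapp, map_sub, map_smul, hom_comm f₃, hq', map_smul, hwz]
          show π • M₃.d i₀ (i₀+1) (Z x) - π • M₃.d i₀ (i₀+1) (Z x) = 0
          abel
        -- step 3 : p, m via combined lifting into a product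
        obtain ⟨pm, hpm⟩ := exists_comp_eq
          (LinearMap.prod
            (((P₃.d i₀ (i₀+1)).hom : P₃.X i₀ →ₗ[R] P₃.X (i₀+1)) ∘ₗ
              (LinearMap.fst R (P₃.X i₀) (M₃.X (i₀-1))))
            ((((f₃.f i₀).hom : P₃.X i₀ →ₗ[R] M₃.X i₀) ∘ₗ LinearMap.fst R _ _) +
              (((M₃.d (i₀-1) i₀).hom : M₃.X (i₀-1) →ₗ[R] M₃.X i₀) ∘ₗ LinearMap.snd R _ _)))
          (LinearMap.prod 0 (π • Y))
          (by
            intro x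
            obtain ⟨p, hp, m, hm⟩ := hsurj i₀ (by omega) (i₀-1) (i₀+1) (by omega) rfl
              (Y x) (hYcyc x)
            exact ⟨(p, m), by
              apply Prod.ext
              · simpa using hp
              · simpa using hm.symm⟩)
        have hp : ∀ x, P₃.d i₀ (i₀+1) (pm x).1 = 0 := by
          intro x
          have := congrArg Prod.fst (hpm x)
          simpa using this
        have hm : ∀ x, f₃.f i₀ (pm x).1 + M₃.d (i₀-1) i₀ (pm x).2 = π • Y x := by
          intro x
          have := congrArg Prod.snd (hpm x)
          simpa using this
        refine ⟨π • q + (LinearMap.fst R (P₃.X i₀) (M₃.X (i₀-1))) ∘ₗ pm,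
          - ((LinearMap.snd R (P₃.X i₀) (M₃.X (i₀-1))) ∘ₗ pm), ?_, ?_⟩
        · intro x
          show P₃.d i₀ (i₀+1) (π • q x + (pm x).1) = _
          rw [map_add, map_smul, hq', hp, add_zero, smul_smul, ← pow_two]
        · intro x
          show f₃.f i₀ (π • q x + (pm x).1) = _
          rw [map_add, map_smul]
          have e1 : f₃.f i₀ ((pm x).1) = π • Y x - M₃.d (i₀-1) i₀ ((pm x).2) := by
            rw [← hm]; abel
          rw [e1, hYapp]
          have : π • f₃.f i₀ (q x) + (π • (π • Z x - f₃.f i₀ (q x)) -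
              M₃.d (i₀-1) i₀ ((pm x).2)) = (π * π) • Z x - M₃.d (i₀-1) i₀ ((pm x).2) := by
            rw [smul_sub, smul_smul]
            abel
          rw [this, hZapp]
          have hneg : ((- (LinearMap.snd R (P₃.X i₀) (M₃.X (i₀ - 1))) ∘ₗ pm) x) = -((pm x).2) := rfl
          rw [hneg, map_neg]
          show (π * π) • ((π ^ (2*n)) • u.f i₀ x + s i₀ (i₀+1) (P₂.d i₀ (i₀+1) x)) -
              M₃.d (i₀-1) i₀ ((pm x).2) = (π ^ (2 * (n+1))) • u.f i₀ x
            + - M₃.d (i₀-1) i₀ ((pm x).2) + (π^2) • s i₀ (i₀+1) (P₂.d i₀ (i₀+1) x)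
          rw [smul_add, smul_smul]
          have h2 : π * π * π ^ (2*n) = π ^ (2 * (n+1)) := by
            rw [← pow_two, ← pow_add]; congr 1; omega
          have h3 : π * π = π ^ 2 := (pow_two π).symm
          rw [h2, h3]
          abel
      · -- trivial: P₂.X i₀ = 0
        refine ⟨0, 0, ?_, ?_⟩ <;> intro x <;> rw [hsupp i₀ (Or.inl (by omega)) x] <;> simp
    obtain ⟨cN, sN, hcN, hEN⟩ := key
    classical
    refine ⟨Function.update (fun j => (π^2 : R) • c j) i₀ cN,
      Function.update (fun i => fun j => (π^2 : R) • s i j) (i₀-1)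
        (Function.update (fun j => (π^2 : R) • s (i₀-1) j) i₀ sN), ?_, ?_⟩
    · intro j k hk hj x
      obtain rfl : k = j + 1 := hk.symm
      by_cases hji : j = i₀
      · subst hji
        rw [Function.update_self, Function.update_of_ne (by omega : i₀ + 1 ≠ i₀)]
        simpa using hcN x
      · rw [Function.update_of_ne hji, Function.update_of_ne (by omega : j + 1 ≠ i₀)]
        have := hc j (j+1) rfl (by omega) x
        show P₃.d j (j+1) ((π^2:R) • c j x) = (π^2:R) • c (j+1) (P₂.d j (j+1) x)
        rw [map_smul, this]
    · intro i j k hi hk hj x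
      obtain rfl : i = j - 1 := by omega
      obtain rfl : k = j + 1 := hk.symm
      by_cases hji : j = i₀
      · subst hji
        rw [Function.update_of_ne (by omega : i₀ ≠ i₀ - 1)]
        simp only [Function.update_self]
        have := hEN x
        show f₃.f i₀ (cN x) = π ^ (2 * (n + 1)) • u.f i₀ x + M₃.d (i₀-1) i₀ (sN x)
          + ((π^2:R) • s i₀ (i₀+1)) (P₂.d i₀ (i₀+1) x)
        simpa using this
      · rw [Function.update_of_ne hji,
          Function.update_of_ne (by omega : j - 1 ≠ i₀ - 1),
          Function.update_of_ne (by omega : j ≠ i₀ - 1)]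
        have h2 := hE (j-1) j (j+1) (by omega) rfl (by omega) x
        show f₃.f j ((π^2:R) • c j x) = π ^ (2 * (n + 1)) • u.f j x
          + M₃.d (j-1) j ((π^2:R) • s (j-1) j x) + ((π^2:R) • s j (j+1)) (P₂.d j (j+1) x)
        rw [map_smul, h2, smul_add, smul_add, map_smul, smul_smul, ← pow_add]
        have : (2 + 2 * n) = 2 * (n + 1) := by omega
        rw [this]
        rfl

end Lift



variable {R : Type*} [CommRing R]

lemma tr_refl (X : CochainComplex (ModuleCat R) ℤ) (p : ℤ) (h : p = p) (x : X.X p) :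
    (X.XIsoOfEq h).hom x = x :=
  congrArg (fun e => e.hom x) (X.XIsoOfEq_rfl p)

lemma fam_tr {X : CochainComplex (ModuleCat R) ℤ} {N : Type*} [AddCommGroup N] [Module R N]
    (g : ∀ i : ℤ, X.X i →ₗ[R] N) {i i' : ℤ} (h : i = i') (x : X.X i) :
    g i' ((X.XIsoOfEq h).hom x) = g i x := by
  subst h
  rw [tr_refl]

lemma fam_d_congr {X : CochainComplex (ModuleCat R) ℤ} {A : Type*} [AddCommGroup A] [Module R A]
    (g : ∀ i : ℤ, A →ₗ[R] X.X i) {i i' : ℤ} (h : i = i') (k : ℤ) (y : A) :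
    X.d i k (g i y) = X.d i' k (g i' y) := by subst h; rfl

lemma d_tr {X : CochainComplex (ModuleCat R) ℤ} {i j : ℤ} (h : i = j) (k : ℤ) (x : X.X i) :
    X.d j k ((X.XIsoOfEq h).hom x) = X.d i k x :=
  congrArg (fun m => m x) (X.XIsoOfEq_hom_comp_d h k)

lemma tr_d {X : CochainComplex (ModuleCat R) ℤ} {j k : ℤ} (h : j = k) (i : ℤ) (x : X.X i) :
    (X.XIsoOfEq h).hom (X.d i j x) = X.d i k x :=
  congrArg (fun m => m x) (X.d_comp_XIsoOfEq_hom h i)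

section Cone

variable (P₂ P₃ : CochainComplex (ModuleCat R) ℤ) (c : ∀ j : ℤ, P₂.X j →ₗ[R] P₃.X j)

/-- the shifted mapping cone of an approximate chain map `c` -/
noncomputable def cone
    (hc : ∀ j k : ℤ, j + 1 = k → ∀ x : P₂.X j, P₃.d j k (c j x) = c k (P₂.d j k x)) :
    CochainComplex (ModuleCat R) ℤ where
  X j := ModuleCat.of R (P₂.X j × P₃.X (j-1))
  d j k := if h : j + 1 = k then ModuleCat.ofHom (LinearMap.prod
      (((P₂.d j k).hom : P₂.X j →ₗ[R] P₂.X k).comp (LinearMap.fst R (P₂.X j) (P₃.X (j-1))))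
      ((((P₃.XIsoOfEq (show j = k-1 by omega)).hom.hom :
            P₃.X j →ₗ[R] P₃.X (k-1)).comp ((c j).comp (LinearMap.fst R _ _))) -
        ((P₃.d (j-1) (k-1)).hom : P₃.X (j-1) →ₗ[R] P₃.X (k-1)).comp (LinearMap.snd R _ _)))
    else 0
  shape := by
    intro i j h
    have : ¬ (i + 1 = j) := h
    rw [dif_neg this]
  d_comp_d' := by
    intro i j k hij hjk
    have hij' : i + 1 = j := hij
    have hjk' : j + 1 = k := hjk
    subst hij' hjk'
    rw [dif_pos rfl, dif_pos rfl]
    apply ModuleCat.hom_ext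
    apply LinearMap.ext
    rintro ⟨x, y⟩
    show (_ , _) = (0 : ↑(P₂.X (i+1+1)) × ↑(P₃.X (i+1+1-1)))
    apply Prod.ext
    · show P₂.d (i+1) (i+1+1) (P₂.d i (i+1) x) = 0
      rw [d_d]
    · show (P₃.XIsoOfEq (show i+1 = i+1+1-1 by omega)).hom
          (c (i+1) (P₂.d i (i+1) x)) -
          P₃.d (i+1-1) (i+1+1-1)
            ((P₃.XIsoOfEq (show i = i+1-1 by omega)).hom (c i x) - P₃.d (i-1) (i+1-1) y) = 0
      rw [map_sub, d_tr, d_d, sub_zero]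
      rw [← hc i (i+1) rfl x, tr_d]
      abel
variable (hc : ∀ j k : ℤ, j + 1 = k → ∀ x : P₂.X j, P₃.d j k (c j x) = c k (P₂.d j k x))

lemma cone_d_apply (j k : ℤ) (h : j + 1 = k) (x : P₂.X j) (y : P₃.X (j-1)) :
    (cone P₂ P₃ c hc).d j k ((x, y) : ↑(P₂.X j) × ↑(P₃.X (j-1))) =
      ((P₂.d j k x, (P₃.XIsoOfEq (show j = k-1 by omega)).hom (c j x) - P₃.d (j-1) (k-1) y) :
        ↑(P₂.X k) × ↑(P₃.X (k-1))) := by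
  subst h
  dsimp only [cone]
  rw [dif_pos rfl]
  rfl

variable (M₁ : CochainComplex (ModuleCat R) ℤ)
  (η : ∀ j : ℤ, P₂.X j →ₗ[R] M₁.X j)
  (h' : ∀ i j : ℤ, P₃.X i →ₗ[R] M₁.X j)

variable (hcomm : ∀ (j k : ℤ) (hjk : j + 1 = k), ∀ (x : P₂.X j) (y : P₃.X (j-1)),
      M₁.d j k (η j x - h' (j-1) j y) =
        η k (P₂.d j k x) - h' (k-1) k
          ((P₃.XIsoOfEq (show j = k-1 by omega)).hom (c j x) - P₃.d (j-1) (k-1) y))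

/-- the induced map from the cone to `M₁` -/
noncomputable def coneMap : cone P₂ P₃ c hc ⟶ M₁ where
  f j := ModuleCat.ofHom
    ((η j).comp (LinearMap.fst R (P₂.X j) (P₃.X (j-1))) -
     (h' (j-1) j).comp (LinearMap.snd R (P₂.X j) (P₃.X (j-1))))
  comm' := by
    intro j k hjk
    have h : j + 1 = k := hjk
    apply ModuleCat.hom_ext
    apply LinearMap.ext
    rintro ⟨x, y⟩
    show M₁.d j k (η j x - h' (j-1) j y) = _
    rw [hcomm j k h x y]
    have := cone_d_apply P₂ P₃ c hc j k h x y
    show _ = (η k ((((cone P₂ P₃ c hc).d j k) ((x,y) : ↑(P₂.X j) × ↑(P₃.X (j-1)))).1) -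
      h' (k-1) k ((((cone P₂ P₃ c hc).d j k) ((x,y) : ↑(P₂.X j) × ↑(P₃.X (j-1)))).2))
    rw [this]

lemma coneMap_apply (j : ℤ) (x : P₂.X j) (y : P₃.X (j-1)) :
    (coneMap P₂ P₃ c hc M₁ η h' hcomm).f j ((x, y) : ↑(P₂.X j) × ↑(P₃.X (j-1))) =
      η j x - h' (j-1) j y := rfl

end Cone


section BridgeComplex

variable {X Y : CochainComplex (ModuleCat R) ℤ} (f : X ⟶ Y) (j : ℤ)

noncomputable def scIso (X : CochainComplex (ModuleCat R) ℤ) (j : ℤ) :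
    X.sc j ≅ X.sc' (j-1) j (j+1) :=
  X.isoSc' (j-1) j (j+1) (by simp) (by simp)

lemma sq1 : HomologicalComplex.homologyMap f j ≫ ShortComplex.homologyMap ((scIso Y j).hom) =
    ShortComplex.homologyMap ((scIso X j).hom) ≫
      ShortComplex.homologyMap ((HomologicalComplex.shortComplexFunctor' (ModuleCat R)
        (ComplexShape.up ℤ) (j-1) j (j+1)).map f) := by
  change ShortComplex.homologyMap ((HomologicalComplex.shortComplexFunctor (ModuleCat R)
      (ComplexShape.up ℤ) j).map f) ≫ ShortComplex.homologyMap ((scIso Y j).hom) = _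
  rw [← ShortComplex.homologyMap_comp,
    ← ShortComplex.homologyMap_comp]
  congr 1
  exact (HomologicalComplex.natIsoSc' (ModuleCat R) (ComplexShape.up ℤ) (j-1) j (j+1)
    (by simp) (by simp)).hom.naturality f

lemma piSurj_conj (π : R) :
    IsPiSurjective π (HomologicalComplex.homologyMap f j) ↔
      IsPiSurjective π (hMap ((HomologicalComplex.shortComplexFunctor' (ModuleCat R)
        (ComplexShape.up ℤ) (j-1) j (j+1)).map f)) := by
  refine isPiSurjective_of_comm π _ _
    (ShortComplex.homologyMapIso (scIso X j) ≪≫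
      (X.sc' (j-1) j (j+1)).moduleCatLeftHomologyData.homologyIso)
    (ShortComplex.homologyMapIso (scIso Y j) ≪≫
      (Y.sc' (j-1) j (j+1)).moduleCatLeftHomologyData.homologyIso) ?_
  change (HomologicalComplex.homologyMap f j ≫ ShortComplex.homologyMap (scIso Y j).hom) ≫
      (Y.sc' (j-1) j (j+1)).moduleCatLeftHomologyData.homologyIso.hom =
    (ShortComplex.homologyMap (scIso X j).hom ≫
      (X.sc' (j-1) j (j+1)).moduleCatLeftHomologyData.homologyIso.hom) ≫ _
  rw [sq1 f j]
  exact (Category.assoc _ _ _).trans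
    ((congrArg (fun g => ShortComplex.homologyMap (scIso X j).hom ≫ g)
      (homologyMap_eq_hMap _)).trans (Category.assoc _ _ _).symm)

lemma piKer_conj (π : R) :
    (∀ h, HomologicalComplex.homologyMap f j h = 0 → π • h = 0) ↔
      (∀ h, hMap ((HomologicalComplex.shortComplexFunctor' (ModuleCat R)
        (ComplexShape.up ℤ) (j-1) j (j+1)).map f) h = 0 → π • h = 0) := by
  refine isPiKer_of_comm π _ _
    (ShortComplex.homologyMapIso (scIso X j) ≪≫
      (X.sc' (j-1) j (j+1)).moduleCatLeftHomologyData.homologyIso)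
    (ShortComplex.homologyMapIso (scIso Y j) ≪≫
      (Y.sc' (j-1) j (j+1)).moduleCatLeftHomologyData.homologyIso) ?_
  change (HomologicalComplex.homologyMap f j ≫ ShortComplex.homologyMap (scIso Y j).hom) ≫
      (Y.sc' (j-1) j (j+1)).moduleCatLeftHomologyData.homologyIso.hom =
    (ShortComplex.homologyMap (scIso X j).hom ≫
      (X.sc' (j-1) j (j+1)).moduleCatLeftHomologyData.homologyIso.hom) ≫ _
  rw [sq1 f j]
  exact (Category.assoc _ _ _).trans
    ((congrArg (fun g => ShortComplex.homologyMap (scIso X j).hom ≫ g)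
      (homologyMap_eq_hMap _)).trans (Category.assoc _ _ _).symm)

lemma bridge_surj (π : R) :
    IsPiSurjective π (HomologicalComplex.homologyMap f j) ↔ ESurj π f j := by
  rw [piSurj_conj f j π, isPiSurjective_hMap_iff]
  constructor
  · intro H i k hi hk y hy
    obtain rfl : i = j - 1 := by omega
    obtain rfl : k = j + 1 := by omega
    obtain ⟨x, hx, w, hw⟩ := H y hy
    exact ⟨x, hx, w, hw⟩
  · intro H y hy
    obtain ⟨x, hx, w, hw⟩ := H (j-1) (j+1) (by omega) rfl y hy
    exact ⟨x, hx, w, hw⟩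

lemma bridge_ker (π : R) :
    (∀ h, HomologicalComplex.homologyMap f j h = 0 → π • h = 0) ↔ EKer π f j := by
  rw [piKer_conj f j π, isPiKer_hMap_iff]
  constructor
  · intro H i k hi hk x hx hw
    obtain rfl : i = j - 1 := by omega
    obtain rfl : k = j + 1 := by omega
    obtain ⟨v, hv⟩ := H x hx hw
    exact ⟨v, hv⟩
  · intro H x hx hw
    obtain ⟨v, hv⟩ := H (j-1) (j+1) (by omega) rfl x hx hw
    exact ⟨v, hv⟩

lemma bridge_iso (π : R) :
    IsPiIsomorphism π (HomologicalComplex.homologyMap f j) ↔ (EKer π f j ∧ ESurj π f j) := by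
  rw [IsPiIsomorphism, ← bridge_ker f j π, ← bridge_surj f j π]
  rfl

end BridgeComplex

section Main

variable (π : R) (a b : ℤ)
  {M₁ M₂ M₃ P₂ P₃ : CochainComplex (ModuleCat R) ℤ}

set_option maxHeartbeats 1000000 in
lemma main_construction
    (α : M₁ ⟶ M₂) (β : M₂ ⟶ M₃) (f₂ : P₂ ⟶ M₂) (f₃ : P₃ ⟶ M₃)
    (hαinj : ∀ i : ℤ, Function.Injective (α.f i))
    (hexact : ∀ i : ℤ, Function.Exact (α.f i) (β.f i))
    (hβsurj : ∀ i : ℤ, Function.Surjective (β.f i))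
    (hP₂free : ∀ i : ℤ, Module.Free R (P₂.X i))
    (hP₂fin : ∀ i : ℤ, Module.Finite R (P₂.X i))
    (hP₂supp : ∀ i : ℤ, i < a - 1 ∨ b - 1 < i → ∀ x : P₂.X i, x = 0)
    (hP₃free : ∀ i : ℤ, Module.Free R (P₃.X i))
    (hP₃fin : ∀ i : ℤ, Module.Finite R (P₃.X i))
    (hP₃supp : ∀ i : ℤ, i < a - 2 ∨ b - 1 < i → ∀ x : P₃.X i, x = 0)
    (hf₂ker : ∀ j : ℤ, a - 1 < j → EKer π f₂ j)
    (hf₂surj : ∀ j : ℤ, a - 1 ≤ j → ESurj π f₂ j)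
    (hf₃ker : ∀ j : ℤ, a - 1 ≤ j → EKer π f₃ j)
    (hf₃surj : ∀ j : ℤ, a - 2 ≤ j → ESurj π f₃ j) :
    ∃ (P₁ : CochainComplex (ModuleCat R) ℤ) (F : P₁ ⟶ M₁),
      (∀ i : ℤ, Module.Free R (P₁.X i)) ∧ (∀ i : ℤ, Module.Finite R (P₁.X i)) ∧
      (∀ i : ℤ, i < a - 1 ∨ b < i → ∀ x : P₁.X i, x = 0) ∧
      (∀ j : ℤ, a - 1 < j → EKer (π ^ (2 * ((b - a).toNat + 1) + 3)) F j) ∧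
      (∀ j : ℤ, a - 1 ≤ j → ESurj (π ^ (2 * ((b - a).toNat + 1) + 3)) F j) := by
  set K : ℕ := 2 * ((b - a).toNat + 1) with hKdef
  -- approximate lifting c with homotopy s
  obtain ⟨c, s, hc, hE⟩ := pi_lift π (f₂ ≫ β) f₃ a b hP₂free hP₂supp hf₃ker hf₃surj
  have hu : ∀ (j : ℤ) (x : P₂.X j), (f₂ ≫ β).f j x = β.f j (f₂.f j x) := fun _ _ => rfl
  simp only [hu] at hE
  -- degreewise lift t of f₃ through β
  have htex : ∀ j : ℤ, ∃ tj : P₃.X j →ₗ[R] M₂.X j, ∀ x, β.f j (tj x) = f₃.f j x := by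
    intro j
    haveI := hP₃free j
    obtain ⟨tj, htj⟩ := Module.projective_lifting_property
      ((β.f j).hom : M₂.X j →ₗ[R] M₃.X j) ((f₃.f j).hom : P₃.X j →ₗ[R] M₃.X j) (hβsurj j)
    exact ⟨tj, fun x => LinearMap.congr_fun htj x⟩
  choose t ht using htex
  -- the defect h' of t, valued in M₁
  have hh'ex : ∀ i j : ℤ, ∃ g : P₃.X i →ₗ[R] M₁.X j,
      ∀ x, α.f j (g x) = M₂.d i j (t i x) - t j (P₃.d i j x) := by
    intro i j
    haveI := hP₃free i
    apply exists_comp_eq ((α.f j).hom : M₁.X j →ₗ[R] M₂.X j)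
      (((M₂.d i j).hom : M₂.X i →ₗ[R] M₂.X j) ∘ₗ t i - (t j) ∘ₗ ((P₃.d i j).hom : P₃.X i →ₗ[R] P₃.X j))
    intro x
    have hb : β.f j (M₂.d i j (t i x) - t j (P₃.d i j x)) = 0 := by
      have e1 : β.f j (M₂.d i j (t i x)) = M₃.d i j (f₃.f i x) := by
        rw [← hom_comm β, ht]
      have e2 : β.f j (t j (P₃.d i j x)) = M₃.d i j (f₃.f i x) := by
        rw [ht, ← hom_comm f₃]
      rw [map_sub, e1, e2, sub_self]
    obtain ⟨m, hm⟩ := (hexact j _).mp hb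
    exact ⟨m, hm⟩
  choose h' hh' using hh'ex
  -- lift s̃ of the homotopy s through β
  have hstex : ∀ i j : ℤ, ∃ g : P₂.X j →ₗ[R] M₂.X i, ∀ x, β.f i (g x) = s i j x := by
    intro i j
    haveI := hP₂free j
    apply exists_comp_eq ((β.f i).hom : M₂.X i →ₗ[R] M₃.X i) (s i j)
    intro x
    obtain ⟨m, hm⟩ := hβsurj i (s i j x)
    exact ⟨m, hm⟩
  choose st hst using hstex
  -- the corrected comparison map η : P₂ → M₁
  have hηex : ∀ j : ℤ, ∃ g : P₂.X j →ₗ[R] M₁.X j, ∀ x, α.f j (g x) =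
      (π ^ K) • f₂.f j x + M₂.d (j-1) j (st (j-1) j x)
        + st j (j+1) (P₂.d j (j+1) x) - t j (c j x) := by
    intro j
    haveI := hP₂free j
    apply exists_comp_eq ((α.f j).hom : M₁.X j →ₗ[R] M₂.X j)
      ((π ^ K) • ((f₂.f j).hom : P₂.X j →ₗ[R] M₂.X j)
        + ((M₂.d (j-1) j).hom : M₂.X (j-1) →ₗ[R] M₂.X j) ∘ₗ st (j-1) j
        + (st j (j+1)) ∘ₗ ((P₂.d j (j+1)).hom : P₂.X j →ₗ[R] P₂.X (j+1))
        - (t j) ∘ₗ c j)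
    intro x
    have hb : β.f j ((π ^ K) • f₂.f j x + M₂.d (j-1) j (st (j-1) j x)
        + st j (j+1) (P₂.d j (j+1) x) - t j (c j x)) = 0 := by
      rw [map_sub, map_add, map_add, map_smul]
      rw [ht, hst]
      have e1 : β.f j (M₂.d (j-1) j (st (j-1) j x)) = M₃.d (j-1) j (s (j-1) j x) := by
        rw [← hom_comm β, hst]
      rw [e1, hE (j-1) j (j+1) (by omega) rfl x]
      abel
    obtain ⟨m, hm⟩ := (hexact j _).mp hb
    exact ⟨m, hm⟩
  choose η hη0 using hηex
  have hη : ∀ i j k : ℤ, i + 1 = j → j + 1 = k → ∀ x : P₂.X j, α.f j (η j x) =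
      (π ^ K) • f₂.f j x + M₂.d i j (st i j x) + st j k (P₂.d j k x) - t j (c j x) := by
    intro i j k hi hk x
    obtain rfl : i = j - 1 := by omega
    obtain rfl : k = j + 1 := by omega
    exact hη0 j x
  -- anticommutation of h'
  have hanti : ∀ i j k : ℤ, i + 1 = j → j + 1 = k → ∀ y : P₃.X i,
      h' j k (P₃.d i j y) = - M₁.d j k (h' i j y) := by
    intro i j k hi hk y
    apply hαinj k
    rw [map_neg, hh' j k]
    have e1 : α.f k (M₁.d j k (h' i j y)) = M₂.d j k (α.f j (h' i j y)) := by
      rw [← hom_comm α]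
    rw [e1, hh' i j, map_sub, d_d, d_d, map_zero]
    abel
  -- chain defect of η
  have hdef : ∀ j k : ℤ, j + 1 = k → ∀ x : P₂.X j,
      η k (P₂.d j k x) = M₁.d j k (η j x) + h' j k (c j x) := by
    intro j k hk x
    apply hαinj k
    rw [map_add, hη j k (k+1) hk rfl (P₂.d j k x)]
    have e1 : α.f k (M₁.d j k (η j x)) = M₂.d j k (α.f j (η j x)) := by
      rw [← hom_comm α]
    rw [e1, hη (j-1) j k (by omega) hk x, hh' j k]
    rw [d_d, map_zero, add_zero]
    rw [map_sub, map_add, map_add, map_smul]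
    rw [d_d]
    have e2 : M₂.d j k (f₂.f j x) = f₂.f k (P₂.d j k x) := hom_comm f₂ j k x
    have e3 : P₃.d j k (c j x) = c k (P₂.d j k x) := hc j k hk x
    rw [e2, e3]
    abel
  -- commutation needed for the cone map
  have hcomm : ∀ (j k : ℤ) (hjk : j + 1 = k), ∀ (x : P₂.X j) (y : P₃.X (j-1)),
      M₁.d j k (η j x - h' (j-1) j y) =
        η k (P₂.d j k x) - h' (k-1) k
          ((P₃.XIsoOfEq (show j = k-1 by omega)).hom (c j x) - P₃.d (j-1) (k-1) y) := by
    intro j k hjk x y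
    rw [map_sub (h' (k-1) k), fam_tr (fun i => h' i k) (show j = k-1 by omega) (c j x)]
    rw [hanti (j-1) (k-1) k (by omega) (by omega) y]
    rw [fam_d_congr (fun i => h' (j-1) i) (show k-1 = j by omega) k y]
    rw [hdef j k hjk x]
    rw [map_sub]
    abel
  refine ⟨cone P₂ P₃ c hc, coneMap P₂ P₃ c hc M₁ η h' hcomm, ?_, ?_, ?_, ?_, ?_⟩
  · intro i
    haveI := hP₂free i
    haveI := hP₃free (i-1)
    show Module.Free R (↑(P₂.X i) × ↑(P₃.X (i-1)))
    infer_instance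
  · intro i
    haveI := hP₂fin i
    haveI := hP₃fin (i-1)
    show Module.Finite R (↑(P₂.X i) × ↑(P₃.X (i-1)))
    infer_instance
  · rintro i hi ⟨x, y⟩
    have hx : x = 0 := hP₂supp i (by omega) x
    have hy : y = 0 := hP₃supp (i-1) (by omega) y
    rw [hx, hy]
    rfl
  · -- Claim B : kernel condition
    intro j hj i k hi hk z hz hbd
    obtain rfl : i = j - 1 := by omega
    obtain rfl : k = j + 1 := by omega
    obtain ⟨x, y⟩ := z
    rw [cone_d_apply P₂ P₃ c hc j (j+1) rfl] at hz
    have hxc : P₂.d j (j+1) x = 0 := by exact congrArg Prod.fst hz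
    have hyc0 : (P₃.XIsoOfEq (show j = j+1-1 by omega)).hom (c j x)
        - P₃.d (j-1) (j+1-1) y = 0 := by exact congrArg Prod.snd hz
    have hyc : c j x = P₃.d (j-1) j y := by
      have h0 := sub_eq_zero.mp hyc0
      rw [← tr_d (show j = j+1-1 by omega) (j-1) y] at h0
      exact (P₃.XIsoOfEq (show j = j+1-1 by omega)).toLinearEquiv.injective h0
    obtain ⟨w, hw⟩ := hbd
    rw [coneMap_apply] at hw
    have h2 : f₂.f j ((π^K) • x) = M₂.d (j-1) j (α.f (j-1) w - st (j-1) j x + t (j-1) y) := by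
      have e1 := congrArg (α.f j) hw
      rw [map_sub, hη (j-1) j (j+1) (by omega) rfl x, hh' (j-1) j, hxc, map_zero, add_zero,
        hyc, ← hom_comm α] at e1
      simp only [map_add, map_sub, map_smul] at e1 ⊢
      linear_combination (norm := module) e1
    have hxcyc : P₂.d j (j+1) ((π^K) • x) = 0 := by rw [map_smul, hxc, smul_zero]
    obtain ⟨x₁, hx₁⟩ := hf₂ker j hj (j-1) (j+1) (by omega) rfl ((π^K) • x) hxcyc ⟨_, h2⟩
    have hAcyc : M₂.d (j-1) j (f₂.f (j-1) x₁
        - π • (α.f (j-1) w - st (j-1) j x + t (j-1) y)) = 0 := by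
      rw [map_sub, map_smul, hom_comm f₂, ← hx₁, map_smul (ConcreteCategory.hom (f₂.f j)), h2, sub_self]
    obtain ⟨x₂, hx₂c, w₂', hw₂'⟩ := hf₂surj (j-1) (by omega) (j-1-1) j (by omega) (by omega)
      _ hAcyc
    have hdx₁' : P₂.d (j-1) j (π • x₁ - x₂) = (π^(K+2)) • x := by
      rw [map_sub, map_smul, ← hx₁, hx₂c, sub_zero]
      module
    have hycyc : P₃.d (j-1) j ((π^(K+2)) • y - c (j-1) (π • x₁ - x₂)) = 0 := by
      rw [map_sub, map_smul, hc (j-1) j (by omega), hdx₁', map_smul (c j), hyc, sub_self]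
    have e2 : f₂.f (j-1) (π • x₁ - x₂) =
        (π^2) • (α.f (j-1) w - st (j-1) j x + t (j-1) y) + M₂.d (j-1-1) (j-1) w₂' := by
      rw [map_sub, map_smul]
      linear_combination (norm := module) hw₂'
    have hybd : f₃.f (j-1) ((π^(K+2)) • y - c (j-1) (π • x₁ - x₂)) =
        M₃.d (j-1-1) (j-1) ((-(π^K)) • β.f (j-1-1) w₂' - s (j-1-1) (j-1) (π • x₁ - x₂)) := by
      rw [map_sub, map_smul (ConcreteCategory.hom (f₃.f (j-1))),
        hE (j-1-1) (j-1) j (by omega) (by omega) (π • x₁ - x₂), hdx₁', e2]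
      simp only [map_add, map_sub, map_smul, map_neg]
      rw [(hexact (j-1)).apply_apply_eq_zero w, hst, ht, ← hom_comm β]
      module
    obtain ⟨y₁, hy₁⟩ := hf₃ker (j-1) (by omega) (j-1-1) j (by omega) (by omega) _ hycyc
      ⟨_, hybd⟩
    refine ⟨(π • (π • x₁ - x₂), -y₁), ?_⟩
    rw [cone_d_apply P₂ P₃ c hc (j-1) j (by omega)]
    apply Prod.ext
    · show (π ^ (K + 3)) • x = P₂.d (j-1) j (π • (π • x₁ - x₂))
      rw [map_smul, hdx₁']
      module
    · show (π ^ (K + 3)) • y = (P₃.XIsoOfEq (show j-1 = j-1 by omega)).hom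
          (c (j-1) (π • (π • x₁ - x₂))) - P₃.d (j-1-1) (j-1) (-y₁)
      rw [tr_refl, map_smul (c (j-1)), map_neg, sub_neg_eq_add]
      linear_combination (norm := module) hy₁
  · -- Claim A : surjectivity condition
    intro j hj i k hi hk m hm
    obtain rfl : i = j - 1 := by omega
    obtain rfl : k = j + 1 := by omega
    have h1 : M₂.d j (j+1) (α.f j m) = 0 := by rw [hom_comm α, hm, map_zero]
    obtain ⟨x₀, hx₀, w₂, hw₂⟩ := hf₂surj j hj (j-1) (j+1) (by omega) rfl (α.f j m) h1
    have e5 : f₂.f j x₀ = π • α.f j m - M₂.d (j-1) j w₂ := by rw [hw₂]; abel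
    have h2 : P₃.d j (j+1) (c j x₀) = 0 := by rw [hc j (j+1) rfl, hx₀, map_zero]
    have h3 : f₃.f j (c j x₀) = M₃.d (j-1) j ((-(π^K)) • β.f (j-1) w₂ + s (j-1) j x₀) := by
      rw [hE (j-1) j (j+1) (by omega) rfl x₀, hx₀, map_zero, add_zero, e5]
      simp only [map_add, map_sub, map_smul, map_neg]
      rw [(hexact j).apply_apply_eq_zero m, ← hom_comm β]
      module
    obtain ⟨v, hv⟩ := hf₃ker j (by omega) (j-1) (j+1) (by omega) rfl (c j x₀) h2 ⟨_, h3⟩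
    have h7 : α.f j (π • η j x₀ - h' (j-1) j v) = (π^(K+2)) • α.f j m
        + M₂.d (j-1) j (π • st (j-1) j x₀ - t (j-1) v - (π^(K+1)) • w₂) := by
      rw [map_sub, map_smul, hη (j-1) j (j+1) (by omega) rfl x₀, hh' (j-1) j, hx₀, map_zero,
        ← hv, map_smul (t j), e5]
      simp only [map_add, map_sub, map_smul]
      module
    have h8 : M₃.d (j-1) j (β.f (j-1)
        (π • st (j-1) j x₀ - t (j-1) v - (π^(K+1)) • w₂)) = 0 := by
      rw [hom_comm β]
      have e8 : M₂.d (j-1) j (π • st (j-1) j x₀ - t (j-1) v - (π^(K+1)) • w₂) =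
          α.f j (π • η j x₀ - h' (j-1) j v - (π^(K+2)) • m) := by
        rw [map_sub (ConcreteCategory.hom (α.f j)), map_smul (ConcreteCategory.hom (α.f j)), h7]
        abel
      rw [e8, (hexact j).apply_apply_eq_zero]
    obtain ⟨p, hp, m₃, hm₃⟩ := hf₃surj (j-1) (by omega) (j-1-1) j (by omega) (by omega) _ h8
    obtain ⟨m₂', hm₂'⟩ := hβsurj (j-1-1) m₃
    have h10 : β.f (j-1) (π • (π • st (j-1) j x₀ - t (j-1) v - (π^(K+1)) • w₂)
        - t (j-1) p - M₂.d (j-1-1) (j-1) m₂') = 0 := by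
      rw [map_sub, map_sub, map_smul, ht, ← hom_comm β, hm₂']
      linear_combination (norm := module) hm₃
    obtain ⟨w₁, hw₁⟩ := (hexact (j-1) _).mp h10
    refine ⟨((π^2) • x₀, π • v + p), ?_, -w₁, ?_⟩
    · rw [cone_d_apply P₂ P₃ c hc j (j+1) rfl]
      have c1 : P₂.d j (j+1) ((π^2) • x₀) = 0 := by rw [map_smul, hx₀, smul_zero]
      have c2 : (P₃.XIsoOfEq (show j = j+1-1 by omega)).hom (c j ((π^2) • x₀))
          - P₃.d (j-1) (j+1-1) (π • v + p) = 0 := by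
        have d2 : P₃.d (j-1) (j+1-1) p = 0 := by
          rw [← tr_d (show j = j+1-1 by omega) (j-1) p, hp, map_zero]
        rw [map_smul (c j), map_smul (ConcreteCategory.hom (P₃.XIsoOfEq (show j = j+1-1 by omega)).hom),
          map_add, map_smul (ConcreteCategory.hom (P₃.d (j-1) (j+1-1))), d2,
          ← tr_d (show j = j+1-1 by omega) (j-1) v, ← hv, map_smul]
        module
      show ((P₂.d j (j+1)) ((π^2) • x₀),
        (P₃.XIsoOfEq (show j = j+1-1 by omega)).hom (c j ((π^2) • x₀))
          - P₃.d (j-1) (j+1-1) (π • v + p)) = (0 : ↑(P₂.X (j+1)) × ↑(P₃.X (j+1-1)))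
      rw [c1, c2]
      rfl
    · rw [coneMap_apply]
      apply hαinj j
      have eF : α.f j (η j ((π^2) • x₀) - h' (j-1) j (π • v + p)) =
          π • α.f j (π • η j x₀ - h' (j-1) j v) - α.f j (h' (j-1) j p) := by
        simp only [map_add, map_sub, map_smul]
        module
      have e9 : α.f j (h' (j-1) j p) = M₂.d (j-1) j (t (j-1) p) := by
        rw [hh' (j-1) j, hp, map_zero, sub_zero]
      rw [map_add (ConcreteCategory.hom (α.f j)), eF, h7, e9, ← hom_comm α, map_neg (ConcreteCategory.hom (α.f (j-1))), hw₁]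
      simp only [map_add, map_sub, map_smul, map_neg, d_d]
      module

end Main

end PCProof

end Proof

/-- **Proposition 4.7(3).** There is an integer `l ≥ 0` depending only on `b - a` such that:
for every commutative ring `R`, every `π ∈ R`, and every short exact sequence of cochain
complexes of `R`-modules `0 → M₁^• → M₂^• → M₃^• → 0` (exact in each degree), if `M₂^•` is
`π`-`[a-1,b-1]`-pseudo-coherent and `M₃^•` is `π`-`[a-2,b-1]`-pseudo-coherent, then `M₁^•`
is `π^l`-`[a-1,b]`-pseudo-coherent. -/
theorem isPiPseudoCoherent_of_shortExact_first :
    ∃ l : ℤ → ℕ, ∀ (a b : ℤ), a ≤ b →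
      ∀ (R : Type u) [CommRing R] (π : R) (M₁ M₂ M₃ : CochainComplex (ModuleCat R) ℤ)
        (α : M₁ ⟶ M₂) (β : M₂ ⟶ M₃),
        (∀ i : ℤ, Function.Injective (α.f i)) →
        (∀ i : ℤ, Function.Exact (α.f i) (β.f i)) →
        (∀ i : ℤ, Function.Surjective (β.f i)) →
        IsPiPseudoCoherent π (a - 1) (b - 1) M₂ →
        IsPiPseudoCoherent π (a - 2) (b - 1) M₃ →
        IsPiPseudoCoherent (π ^ l (b - a)) (a - 1) b M₁ := by
  refine ⟨fun d => 2 * (d.toNat + 1) + 3, ?_⟩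
  intro a b hab R _ π M₁ M₂ M₃ α β hαinj hexact hβsurj h₂ h₃
  obtain ⟨hM₂supp, P₂, f₂, hP₂free, hP₂fin, hP₂supp, hf₂iso, hf₂surj⟩ := h₂
  obtain ⟨hM₃supp, P₃, f₃, hP₃free, hP₃fin, hP₃supp, hf₃iso, hf₃surj⟩ := h₃
  have hf₂ker' : ∀ j : ℤ, a - 1 < j → PCProof.EKer π f₂ j := fun j hj =>
    ((PCProof.bridge_iso f₂ j π).mp (hf₂iso j (by omega))).1
  have hf₂surj' : ∀ j : ℤ, a - 1 ≤ j → PCProof.ESurj π f₂ j := by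
    intro j hj
    rcases eq_or_lt_of_le hj with h | h
    · rw [← h]
      exact (PCProof.bridge_surj f₂ (a-1) π).mp hf₂surj
    · exact ((PCProof.bridge_iso f₂ j π).mp (hf₂iso j (by omega))).2
  have hf₃ker' : ∀ j : ℤ, a - 1 ≤ j → PCProof.EKer π f₃ j := fun j hj =>
    ((PCProof.bridge_iso f₃ j π).mp (hf₃iso j (by omega))).1
  have hf₃surj' : ∀ j : ℤ, a - 2 ≤ j → PCProof.ESurj π f₃ j := by
    intro j hj
    rcases eq_or_lt_of_le hj with h | h
    · rw [← h]
      exact (PCProof.bridge_surj f₃ (a-2) π).mp hf₃surj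
    · exact ((PCProof.bridge_iso f₃ j π).mp (hf₃iso j (by omega))).2
  obtain ⟨P₁, F, hfree, hfin, hsupp, hker, hsurj⟩ :=
    PCProof.main_construction π a b α β f₂ f₃ hαinj hexact hβsurj
      hP₂free hP₂fin hP₂supp hP₃free hP₃fin hP₃supp hf₂ker' hf₂surj' hf₃ker' hf₃surj'
  refine ⟨?_, P₁, F, hfree, hfin, hsupp, ?_, ?_⟩
  · intro i hi x
    apply hαinj i
    rw [map_zero]
    exact hM₂supp i (by omega) (α.f i x)
  · intro i hi
    rw [PCProof.bridge_iso]
    exact ⟨hker i hi, hsurj i (le_of_lt hi)⟩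
  · rw [PCProof.bridge_surj]
    exact hsurj (a-1) le_rfl
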